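/- Let R_x and R_{x'} be N×N real symmetric positive definite matrices with all diagonal entries equal to 1. Let Λ_max = max(λ_max(R_x), λ_max(R_{x'})) and Λ_min = min(λ_min(R_x), λ_min(R_{x'})), and suppose Λ_min < Λ_max. Let q ∈ [0,1], R = q·R_x + (1−q)·R_{x'}, and k = N(Λ_max − 1)/(Λ_max − Λ_min). Then det R ≥ Λ_min^k · Λ_max^{N−k} (powers with real exponents). -/

import Mathlib

open Matrix

/-- The largest eigenvalue of a real symmetric (Hermitian) matrix. -/
noncomputable def lamMax {n : ℕ} {A : Matrix (Fin n) (Fin n) ℝ} (hA : A.IsHermitian) : ℝ :=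
  ⨆ i, hA.eigenvalues i

/-- The smallest eigenvalue of a real symmetric (Hermitian) matrix. -/
noncomputable def lamMin {n : ℕ} {A : Matrix (Fin n) (Fin n) ℝ} (hA : A.IsHermitian) : ℝ :=
  ⨅ i, hA.eigenvalues i

/-- Chord inequality for the concave logarithm. -/
private lemma chord_log {m M x : ℝ} (hm : 0 < m) (hmM : m < M) (hx1 : m ≤ x) (hx2 : x ≤ M) :
    (M - x) / (M - m) * Real.log m + (x - m) / (M - m) * Real.log M ≤ Real.log x := by
  have hd : 0 < M - m := by linarith
  have hM : (0 : ℝ) < M := hm.trans hmM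
  have h := (strictConcaveOn_log_Ioi.concaveOn).2 (Set.mem_Ioi.mpr hm) (Set.mem_Ioi.mpr hM)
      (show (0:ℝ) ≤ (M - x) / (M - m) from div_nonneg (by linarith) hd.le)
      (show (0:ℝ) ≤ (x - m) / (M - m) from div_nonneg (by linarith) hd.le)
      (by rw [← add_div, show M - x + (x - m) = M - m by ring]; exact div_self hd.ne')
  have hx : (M - x) / (M - m) * m + (x - m) / (M - m) * M = x := by
    field_simp; ring
  rw [smul_eq_mul, smul_eq_mul, smul_eq_mul, smul_eq_mul, hx] at h
  exact h

/-- Product lower bound for numbers in `[m, M]` with sum `N`. -/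
private lemma prod_ge_rpow {N : ℕ} (μ : Fin N → ℝ) (m M : ℝ)
    (hm : 0 < m) (hmM : m < M) (hlo : ∀ i, m ≤ μ i) (hhi : ∀ i, μ i ≤ M)
    (hsum : ∑ i, μ i = (N : ℝ)) :
    m ^ ((N : ℝ) * (M - 1) / (M - m)) * M ^ ((N : ℝ) - (N : ℝ) * (M - 1) / (M - m))
      ≤ ∏ i, μ i := by
  have hM : (0 : ℝ) < M := hm.trans hmM
  have hd : (0 : ℝ) < M - m := by linarith
  set k := (N : ℝ) * (M - 1) / (M - m) with hk
  have hμ : ∀ i, 0 < μ i := fun i => hm.trans_le (hlo i)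
  have s1 : ∑ i, (M - μ i) = (N : ℝ) * M - N := by
    rw [Finset.sum_sub_distrib, hsum, Finset.sum_const, Finset.card_univ, Fintype.card_fin,
      nsmul_eq_mul]
  have s2 : ∑ i, (μ i - m) = (N : ℝ) - (N : ℝ) * m := by
    rw [Finset.sum_sub_distrib, hsum, Finset.sum_const, Finset.card_univ, Fintype.card_fin,
      nsmul_eq_mul]
  have e1 : ∑ i, (M - μ i) / (M - m) = k := by
    rw [← Finset.sum_div, s1, hk]; ring
  have e2 : ∑ i, (μ i - m) / (M - m) = (N : ℝ) - k := by
    rw [← Finset.sum_div, s2, hk]; field_simp; ring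
  have hlogsum : k * Real.log m + ((N : ℝ) - k) * Real.log M ≤ ∑ i, Real.log (μ i) := by
    calc k * Real.log m + ((N : ℝ) - k) * Real.log M
        = ∑ i, ((M - μ i) / (M - m) * Real.log m + (μ i - m) / (M - m) * Real.log M) := by
          rw [Finset.sum_add_distrib, ← Finset.sum_mul, ← Finset.sum_mul, e1, e2]
      _ ≤ ∑ i, Real.log (μ i) :=
          Finset.sum_le_sum fun i _ => chord_log hm hmM (hlo i) (hhi i)
  have hrw : m ^ k * M ^ ((N : ℝ) - k)
      = Real.exp (k * Real.log m + ((N : ℝ) - k) * Real.log M) := by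
    rw [Real.exp_add, Real.rpow_def_of_pos hm, Real.rpow_def_of_pos hM]
    ring_nf
  rw [hrw]
  calc Real.exp (k * Real.log m + ((N : ℝ) - k) * Real.log M)
      ≤ Real.exp (∑ i, Real.log (μ i)) := Real.exp_le_exp.mpr hlogsum
    _ = ∏ i, μ i := by
        rw [Real.exp_sum]
        exact Finset.prod_congr rfl fun i _ => Real.exp_log (hμ i)

private lemma diagonal_const_sub {N : ℕ} (c : ℝ) (f : Fin N → ℝ) :
    diagonal (fun i => c - f i) = c • (1 : Matrix (Fin N) (Fin N) ℝ) - diagonal f := by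
  ext i j
  rcases eq_or_ne i j with h | h
  · subst h; simp [Matrix.one_apply_eq]
  · simp [diagonal_apply_ne _ h, Matrix.one_apply_ne h]

/-- Conjugating a diagonal matrix by the eigenvector unitary: positivity criterion. -/
private lemma conj_posSemidef_iff {N : ℕ} {A : Matrix (Fin N) (Fin N) ℝ} (hA : A.IsHermitian)
    (f : Fin N → ℝ) :
    ((hA.eigenvectorUnitary : Matrix (Fin N) (Fin N) ℝ) * diagonal f *
      star (hA.eigenvectorUnitary : Matrix (Fin N) (Fin N) ℝ)).PosSemidef ↔ ∀ i, 0 ≤ f i := by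
  set U : Matrix (Fin N) (Fin N) ℝ := (hA.eigenvectorUnitary : Matrix (Fin N) (Fin N) ℝ) with hU
  have h1 : U * star U = 1 := Matrix.mem_unitaryGroup_iff.mp hA.eigenvectorUnitary.2
  have h2 : star U * U = 1 := Matrix.mem_unitaryGroup_iff'.mp hA.eigenvectorUnitary.2
  constructor
  · intro h
    have h3 := h.conjTranspose_mul_mul_same U
    rw [← Matrix.star_eq_conjTranspose] at h3
    have h4 : star U * (U * diagonal f * star U) * U = diagonal f := by
      calc star U * (U * diagonal f * star U) * U
          = (star U * U) * diagonal f * (star U * U) := by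
            simp only [Matrix.mul_assoc]
        _ = diagonal f := by rw [h2, Matrix.one_mul, Matrix.mul_one]
    rw [h4] at h3
    exact posSemidef_diagonal_iff.mp h3
  · intro h
    have := (posSemidef_diagonal_iff.mpr h).mul_mul_conjTranspose_same U
    rwa [← Matrix.star_eq_conjTranspose] at this

private lemma ofReal_comp_eigenvalues {N : ℕ} {A : Matrix (Fin N) (Fin N) ℝ}
    (hA : A.IsHermitian) :
    (RCLike.ofReal ∘ hA.eigenvalues : Fin N → ℝ) = hA.eigenvalues := by
  ext i; simp

/-- `c • 1 - A` is PSD iff all eigenvalues of `A` are at most `c`. -/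
private lemma smul_one_sub_posSemidef_iff {N : ℕ} {A : Matrix (Fin N) (Fin N) ℝ}
    (hA : A.IsHermitian) (c : ℝ) :
    (c • (1 : Matrix (Fin N) (Fin N) ℝ) - A).PosSemidef ↔ ∀ i, hA.eigenvalues i ≤ c := by
  set U : Matrix (Fin N) (Fin N) ℝ := (hA.eigenvectorUnitary : Matrix (Fin N) (Fin N) ℝ) with hU
  have h1 : U * star U = 1 := Matrix.mem_unitaryGroup_iff.mp hA.eigenvectorUnitary.2
  have key : c • (1 : Matrix (Fin N) (Fin N) ℝ) - A
      = U * diagonal (fun i => c - hA.eigenvalues i) * star U := by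
    conv_lhs => rw [hA.spectral_theorem, Unitary.conjStarAlgAut_apply, ← hU]
    rw [ofReal_comp_eigenvalues hA, diagonal_const_sub, Matrix.mul_sub, Matrix.sub_mul,
      Matrix.mul_smul, Matrix.mul_one, Matrix.smul_mul, h1]
  rw [key, conj_posSemidef_iff hA]
  exact forall_congr' fun i => sub_nonneg

/-- `A - c • 1` is PSD iff all eigenvalues of `A` are at least `c`. -/
private lemma sub_smul_one_posSemidef_iff {N : ℕ} {A : Matrix (Fin N) (Fin N) ℝ}
    (hA : A.IsHermitian) (c : ℝ) :
    (A - c • (1 : Matrix (Fin N) (Fin N) ℝ)).PosSemidef ↔ ∀ i, c ≤ hA.eigenvalues i := by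
  set U : Matrix (Fin N) (Fin N) ℝ := (hA.eigenvectorUnitary : Matrix (Fin N) (Fin N) ℝ) with hU
  have h1 : U * star U = 1 := Matrix.mem_unitaryGroup_iff.mp hA.eigenvectorUnitary.2
  have key : A - c • (1 : Matrix (Fin N) (Fin N) ℝ)
      = U * diagonal (fun i => hA.eigenvalues i - c) * star U := by
    have : diagonal (fun i => hA.eigenvalues i - c)
        = diagonal hA.eigenvalues - c • (1 : Matrix (Fin N) (Fin N) ℝ) := by
      ext i j
      rcases eq_or_ne i j with h | h
      · subst h; simp [Matrix.one_apply_eq]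
      · simp [diagonal_apply_ne _ h, Matrix.one_apply_ne h]
    conv_lhs => rw [hA.spectral_theorem, Unitary.conjStarAlgAut_apply, ← hU]
    rw [ofReal_comp_eigenvalues hA, this, Matrix.mul_sub, Matrix.sub_mul,
      Matrix.mul_smul, Matrix.mul_one, Matrix.smul_mul, h1]
  rw [key, conj_posSemidef_iff hA]
  exact forall_congr' fun i => sub_nonneg

/-- The trace of a real symmetric matrix is the sum of its eigenvalues. -/
private lemma trace_eq_sum_eigs {N : ℕ} {A : Matrix (Fin N) (Fin N) ℝ} (hA : A.IsHermitian) :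
    A.trace = ∑ i, hA.eigenvalues i := by
  set U : Matrix (Fin N) (Fin N) ℝ := (hA.eigenvectorUnitary : Matrix (Fin N) (Fin N) ℝ) with hU
  have h2 : star U * U = 1 := Matrix.mem_unitaryGroup_iff'.mp hA.eigenvectorUnitary.2
  conv_lhs => rw [hA.spectral_theorem, Unitary.conjStarAlgAut_apply, ← hU]
  rw [ofReal_comp_eigenvalues hA, Matrix.trace_mul_comm, ← Matrix.mul_assoc, h2,
    Matrix.one_mul, Matrix.trace_diagonal]

private lemma posSemidef_smul {N : ℕ} {A : Matrix (Fin N) (Fin N) ℝ} (hA : A.PosSemidef)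
    {c : ℝ} (hc : 0 ≤ c) : (c • A).PosSemidef := by
  refine ⟨?_, fun x => ?_⟩
  · rw [Matrix.IsHermitian, conjTranspose_smul, star_trivial, hA.1.eq]
  · have := hA.2 x
    have e : ∀ i j (a b : ℝ), star a * (c • A) i j * b = c * (star a * A i j * b) :=
      fun i j a b => by simp only [Matrix.smul_apply, smul_eq_mul]; ring
    simp only [e, ← Finsupp.mul_sum]
    exact mul_nonneg hc this

/-- for `N × N` real symmetric positive definite matrices `R_x`, `R_x'`
with unit diagonal, `Λ_max = max (λ_max R_x) (λ_max R_x')`,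
`Λ_min = min (λ_min R_x) (λ_min R_x')` with `Λ_min < Λ_max`, `q ∈ [0,1]`,
`R = q•R_x + (1-q)•R_x'`, and `k = N(Λ_max - 1)/(Λ_max - Λ_min)`, one has
`det R ≥ Λ_min^k * Λ_max^(N-k)` (real-exponent powers). -/
theorem det_convex_combination_ge_rpow {N : ℕ} (hN : 0 < N)
    (Rx Rx' : Matrix (Fin N) (Fin N) ℝ)
    (hRx : Rx.PosDef) (hRx' : Rx'.PosDef)
    (hdiag : ∀ i, Rx i i = 1) (hdiag' : ∀ i, Rx' i i = 1)
    (Lmax Lmin : ℝ)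
    (hLmax : Lmax = max (lamMax hRx.isHermitian) (lamMax hRx'.isHermitian))
    (hLmin : Lmin = min (lamMin hRx.isHermitian) (lamMin hRx'.isHermitian))
    (hlt : Lmin < Lmax)
    (q : ℝ) (hq0 : 0 ≤ q) (hq1 : q ≤ 1)
    (k : ℝ) (hk : k = (N : ℝ) * (Lmax - 1) / (Lmax - Lmin)) :
    Lmin ^ k * Lmax ^ ((N : ℝ) - k) ≤ (q • Rx + (1 - q) • Rx').det := by
  haveI : Nonempty (Fin N) := ⟨⟨0, hN⟩⟩
  set R : Matrix (Fin N) (Fin N) ℝ := q • Rx + (1 - q) • Rx' with hRdef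
  have hq1' : (0 : ℝ) ≤ 1 - q := by linarith
  have hR : R.IsHermitian := by
    rw [hRdef, Matrix.IsHermitian, conjTranspose_add, conjTranspose_smul, conjTranspose_smul,
      star_trivial, star_trivial, hRx.isHermitian.eq, hRx'.isHermitian.eq]
  -- eigenvalue bounds of the two matrices
  have hbddA : ∀ {M : Matrix (Fin N) (Fin N) ℝ} (hM : M.IsHermitian) (i : Fin N),
      hM.eigenvalues i ≤ lamMax hM := fun hM i =>
    le_ciSup (Set.finite_range _).bddAbove i
  have hbddB : ∀ {M : Matrix (Fin N) (Fin N) ℝ} (hM : M.IsHermitian) (i : Fin N),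
      lamMin hM ≤ hM.eigenvalues i := fun hM i =>
    ciInf_le (Set.finite_range _).bddBelow i
  have hxmax : ∀ i, hRx.isHermitian.eigenvalues i ≤ Lmax := fun i =>
    (hbddA hRx.isHermitian i).trans (hLmax ▸ le_max_left _ _)
  have hxmax' : ∀ i, hRx'.isHermitian.eigenvalues i ≤ Lmax := fun i =>
    (hbddA hRx'.isHermitian i).trans (hLmax ▸ le_max_right _ _)
  have hxmin : ∀ i, Lmin ≤ hRx.isHermitian.eigenvalues i := fun i =>
    (hLmin ▸ min_le_left _ _).trans (hbddB hRx.isHermitian i)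
  have hxmin' : ∀ i, Lmin ≤ hRx'.isHermitian.eigenvalues i := fun i =>
    (hLmin ▸ min_le_right _ _).trans (hbddB hRx'.isHermitian i)
  -- Lmin is positive
  have hLminpos : 0 < Lmin := by
    obtain ⟨i, hi⟩ := exists_eq_ciInf_of_finite (f := hRx.isHermitian.eigenvalues)
    obtain ⟨j, hj⟩ := exists_eq_ciInf_of_finite (f := hRx'.isHermitian.eigenvalues)
    rw [hLmin]
    rcases min_cases (lamMin hRx.isHermitian) (lamMin hRx'.isHermitian) with ⟨h, _⟩ | ⟨h, _⟩
    · rw [h, lamMin, ← hi]; exact hRx.eigenvalues_pos i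
    · rw [h, lamMin, ← hj]; exact hRx'.eigenvalues_pos j
  -- PSD bounds for R
  have hPSDup : (Lmax • (1 : Matrix (Fin N) (Fin N) ℝ) - R).PosSemidef := by
    have e : Lmax • (1 : Matrix (Fin N) (Fin N) ℝ) - R
        = q • (Lmax • (1 : Matrix (Fin N) (Fin N) ℝ) - Rx)
          + (1 - q) • (Lmax • (1 : Matrix (Fin N) (Fin N) ℝ) - Rx') := by
      rw [hRdef]; module
    rw [e]
    exact (posSemidef_smul ((smul_one_sub_posSemidef_iff hRx.isHermitian Lmax).mpr hxmax)
      hq0).add (posSemidef_smul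
        ((smul_one_sub_posSemidef_iff hRx'.isHermitian Lmax).mpr hxmax') hq1')
  have hPSDlo : (R - Lmin • (1 : Matrix (Fin N) (Fin N) ℝ)).PosSemidef := by
    have e : R - Lmin • (1 : Matrix (Fin N) (Fin N) ℝ)
        = q • (Rx - Lmin • (1 : Matrix (Fin N) (Fin N) ℝ))
          + (1 - q) • (Rx' - Lmin • (1 : Matrix (Fin N) (Fin N) ℝ)) := by
      rw [hRdef]; module
    rw [e]
    exact (posSemidef_smul ((sub_smul_one_posSemidef_iff hRx.isHermitian Lmin).mpr hxmin)
      hq0).add (posSemidef_smul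
        ((sub_smul_one_posSemidef_iff hRx'.isHermitian Lmin).mpr hxmin') hq1')
  have hhi : ∀ i, hR.eigenvalues i ≤ Lmax :=
    (smul_one_sub_posSemidef_iff hR Lmax).mp hPSDup
  have hlo : ∀ i, Lmin ≤ hR.eigenvalues i :=
    (sub_smul_one_posSemidef_iff hR Lmin).mp hPSDlo
  -- trace of R is N
  have htrace : R.trace = (N : ℝ) := by
    have t1 : Rx.trace = (N : ℝ) := by
      simp [Matrix.trace, Matrix.diag, hdiag]
    have t2 : Rx'.trace = (N : ℝ) := by
      simp [Matrix.trace, Matrix.diag, hdiag']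
    rw [hRdef, Matrix.trace_add, Matrix.trace_smul, Matrix.trace_smul, t1, t2,
      smul_eq_mul, smul_eq_mul]
    ring
  have hsum : ∑ i, hR.eigenvalues i = (N : ℝ) := by
    rw [← trace_eq_sum_eigs hR, htrace]
  -- determinant as product of eigenvalues
  have hdet : R.det = ∏ i, hR.eigenvalues i := by
    rw [hR.det_eq_prod_eigenvalues]
    norm_num
  have := prod_ge_rpow hR.eigenvalues Lmin Lmax hLminpos hlt hlo hhi hsum
  rw [← hdet] at this
  rw [hk]
  exact this
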